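/- (Fine's consistency criterion) A vector (p_1,p_2,p_3,p_4,p_{13},p_{14},p_{23},p_{24}) lies in the CHSH polytope if and only if there exists a real number p_{12} such that both (p_1,p_2,p_3,p_{12},p_{13},p_{23}) and (p_1,p_2,p_4,p_{12},p_{14},p_{24}) lie in the Bell–Wigner polytope. -/

import Mathlib

/-- `{0,1}`-valued assignment as a real number. -/
noncomputable def bv (b : Bool) : ℝ := if b then 1 else 0

/-- Vertex of the CHSH polytope. -/
noncomputable def chshVertex (ε : Fin 4 → Bool) : Fin 8 → ℝ :=
  ![bv (ε 0), bv (ε 1), bv (ε 2), bv (ε 3),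
    bv (ε 0) * bv (ε 2), bv (ε 0) * bv (ε 3),
    bv (ε 1) * bv (ε 2), bv (ε 1) * bv (ε 3)]

/-- Vertex of the Bell–Wigner polytope. -/
noncomputable def bwVertex (ε : Fin 3 → Bool) : Fin 6 → ℝ :=
  ![bv (ε 0), bv (ε 1), bv (ε 2),
    bv (ε 0) * bv (ε 1), bv (ε 0) * bv (ε 2), bv (ε 1) * bv (ε 2)]

open Classical in
theorem mem_convexHull_range_iff' {ι : Type} [Fintype ι] {E : Type*} [AddCommGroup E]
    [Module ℝ E] (f : ι → E) (x : E) :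
    x ∈ convexHull ℝ (Set.range f) ↔
      ∃ w : ι → ℝ, (∀ i, 0 ≤ w i) ∧ ∑ i, w i = 1 ∧ ∑ i, w i • f i = x := by
  constructor
  · intro hx
    rw [mem_convexHull_iff_exists_fintype] at hx
    obtain ⟨ι', _, w, z, hw0, hw1, hz, hx⟩ := hx
    choose g hg using fun i => (hz i)
    refine ⟨fun j => ∑ i, if g i = j then w i else 0, fun j => ?_, ?_, ?_⟩
    · exact Finset.sum_nonneg fun i _ => by split <;> simp [hw0]
    · rw [Finset.sum_comm]
      simpa using hw1
    · rw [← hx]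
      simp only [Finset.sum_smul, ite_smul, zero_smul]
      rw [Finset.sum_comm]
      refine Finset.sum_congr rfl fun i _ => ?_
      simp [hg i]
  · rintro ⟨w, hw0, hw1, hx⟩
    exact mem_convexHull_of_exists_fintype w f hw0 hw1 (fun i => Set.mem_range_self i) hx


theorem bw_mem_iff (x1 x2 x3 x12 x13 x23 : ℝ) :
    (![x1,x2,x3,x12,x13,x23] ∈ convexHull ℝ (Set.range bwVertex)) ↔
      ∃ q : Bool → Bool → Bool → ℝ,
        (∀ a b c, 0 ≤ q a b c) ∧
        q false false false + q false false true + q false true false + q false true true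
          + q true false false + q true false true + q true true false + q true true true = 1 ∧
        x1 = q true false false + q true false true + q true true false + q true true true ∧
        x2 = q false true false + q false true true + q true true false + q true true true ∧
        x3 = q false false true + q false true true + q true false true + q true true true ∧
        x12 = q true true false + q true true true ∧
        x13 = q true false true + q true true true ∧
        x23 = q false true true + q true true true := by
  have hsurj : Function.Surjective
      (fun t : Bool × Bool × Bool => (![t.1, t.2.1, t.2.2] : Fin 3 → Bool)) := by
    intro ε
    exact ⟨(ε 0, ε 1, ε 2), by funext i; fin_cases i <;> rfl⟩
  rw [← hsurj.range_comp bwVertex, mem_convexHull_range_iff']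
  constructor
  · rintro ⟨w, hw0, hw1, hx⟩
    simp only [Fintype.sum_prod_type, Fintype.sum_bool] at hw1
    rw [funext_iff] at hx
    simp only [Fin.forall_fin_succ, Fintype.sum_prod_type, Fintype.sum_bool, Finset.sum_apply,
      Pi.smul_apply, smul_eq_mul, Function.comp, bwVertex, bv, Matrix.cons_val_zero,
      Matrix.cons_val_succ] at hx
    norm_num [Matrix.cons_val_two, Matrix.cons_val_three] at hx
    obtain ⟨e1, e2, e3, e4, e5, e6, -⟩ := hx
    exact ⟨fun a b c => w (a, b, c), fun a b c => hw0 _, by linarith, by linarith, by linarith,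
      by linarith, by linarith, by linarith, by linarith⟩
  · rintro ⟨q, hq0, hq1, h1, h2, h3, h12, h13, h23⟩
    refine ⟨fun t => q t.1 t.2.1 t.2.2, fun t => hq0 _ _ _, ?_, ?_⟩
    · simp only [Fintype.sum_prod_type, Fintype.sum_bool]
      linarith
    · rw [funext_iff]
      simp only [Fin.forall_fin_succ, Fintype.sum_prod_type, Fintype.sum_bool, Finset.sum_apply,
        Pi.smul_apply, smul_eq_mul, Function.comp, bwVertex, bv, Matrix.cons_val_zero,
        Matrix.cons_val_succ]
      norm_num [Matrix.cons_val_two, Matrix.cons_val_three]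
      refine ⟨by linarith, by linarith, by linarith, by linarith, by linarith, by linarith⟩


theorem chsh_mem_iff (y1 y2 y3 y4 y13 y14 y23 y24 : ℝ) :
    (![y1,y2,y3,y4,y13,y14,y23,y24] ∈ convexHull ℝ (Set.range chshVertex)) ↔
      ∃ w : Bool → Bool → Bool → Bool → ℝ,
        (∀ a b c d, 0 ≤ w a b c d) ∧
        w false false false false + w false false false true + w false false true false + w false false true true + w false true false false + w false true false true + w false true true false + w false true true true + w true false false false + w true false false true + w true false true false + w true false true true + w true true false false + w true true false true + w true true true false + w true true true true = 1 ∧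
        y1 = w true false false false + w true false false true + w true false true false + w true false true true + w true true false false + w true true false true + w true true true false + w true true true true ∧
        y2 = w false true false false + w false true false true + w false true true false + w false true true true + w true true false false + w true true false true + w true true true false + w true true true true ∧
        y3 = w false false true false + w false false true true + w false true true false + w false true true true + w true false true false + w true false true true + w true true true false + w true true true true ∧
        y4 = w false false false true + w false false true true + w false true false true + w false true true true + w true false false true + w true false true true + w true true false true + w true true true true ∧
        y13 = w true false true false + w true false true true + w true true true false + w true true true true ∧
        y14 = w true false false true + w true false true true + w true true false true + w true true true true ∧
        y23 = w false true true false + w false true true true + w true true true false + w true true true true ∧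
        y24 = w false true false true + w false true true true + w true true false true + w true true true true := by
  have hsurj : Function.Surjective
      (fun t : Bool × Bool × Bool × Bool => (![t.1, t.2.1, t.2.2.1, t.2.2.2] : Fin 4 → Bool)) := by
    intro ε
    exact ⟨(ε 0, ε 1, ε 2, ε 3), by funext i; fin_cases i <;> rfl⟩
  rw [← hsurj.range_comp chshVertex, mem_convexHull_range_iff']
  constructor
  · rintro ⟨w, hw0, hw1, hx⟩
    simp only [Fintype.sum_prod_type, Fintype.sum_bool] at hw1
    rw [funext_iff] at hx
    simp only [Fin.forall_fin_succ, Fintype.sum_prod_type, Fintype.sum_bool, Finset.sum_apply,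
      Pi.smul_apply, smul_eq_mul, Function.comp, chshVertex, bv, Matrix.cons_val_zero,
      Matrix.cons_val_succ] at hx
    norm_num [Matrix.cons_val_two, Matrix.cons_val_three] at hx
    obtain ⟨e1, e2, e3, e4, e5, e6, e7, e8, -⟩ := hx
    exact ⟨fun a b c d => w (a, b, c, d), fun a b c d => hw0 _, by linarith, by linarith,
      by linarith, by linarith, by linarith, by linarith, by linarith, by linarith, by linarith⟩
  · rintro ⟨w, hw0, hw1, h1, h2, h3, h4, h13, h14, h23, h24⟩
    refine ⟨fun t => w t.1 t.2.1 t.2.2.1 t.2.2.2, fun t => hw0 _ _ _ _, ?_, ?_⟩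
    · simp only [Fintype.sum_prod_type, Fintype.sum_bool]
      linarith
    · rw [funext_iff]
      simp only [Fin.forall_fin_succ, Fintype.sum_prod_type, Fintype.sum_bool, Finset.sum_apply,
        Pi.smul_apply, smul_eq_mul, Function.comp, chshVertex, bv, Matrix.cons_val_zero,
        Matrix.cons_val_succ]
      norm_num [Matrix.cons_val_two, Matrix.cons_val_three]
      refine ⟨by linarith, by linarith, by linarith, by linarith, by linarith, by linarith,
        by linarith, by linarith⟩

lemma fine_key (m x y z : ℝ) (h0 : 0 ≤ x) (h1 : x ≤ m) (h2 : y + z = m) :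
    x * y / m + x * z / m = x := by
  rcases eq_or_ne m 0 with hm | hm
  · have hx : x = 0 := le_antisymm (hm ▸ h1) h0
    simp [hx]
  · field_simp
    linear_combination x * h2

/-- Fine's consistency criterion: `(p₁,p₂,p₃,p₄,p₁₃,p₁₄,p₂₃,p₂₄)` lies
in the CHSH polytope iff there exists `p₁₂ ∈ ℝ` such that both
`(p₁,p₂,p₃,p₁₂,p₁₃,p₂₃)` and `(p₁,p₂,p₄,p₁₂,p₁₄,p₂₄)` lie in the Bell–Wigner
polytope. -/
theorem chsh_iff_common_bellWigner_extension
    (p1 p2 p3 p4 p13 p14 p23 p24 : ℝ) :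
    (![p1, p2, p3, p4, p13, p14, p23, p24]
        ∈ convexHull ℝ (Set.range chshVertex)) ↔
      ∃ p12 : ℝ,
        (![p1, p2, p3, p12, p13, p23] ∈ convexHull ℝ (Set.range bwVertex)) ∧
        (![p1, p2, p4, p12, p14, p24] ∈ convexHull ℝ (Set.range bwVertex)) := by
  rw [chsh_mem_iff]
  simp only [bw_mem_iff]
  constructor
  · rintro ⟨w, hw0, hw1, h1, h2, h3, h4, h13, h14, h23, h24⟩
    refine ⟨w true true false false + w true true false true + w true true true false
        + w true true true true,
      ⟨fun a b c => w a b c false + w a b c true,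
        fun a b c => add_nonneg (hw0 _ _ _ _) (hw0 _ _ _ _), ?_, ?_, ?_, ?_, ?_, ?_, ?_⟩,
      ⟨fun a b d => w a b false d + w a b true d,
        fun a b d => add_nonneg (hw0 _ _ _ _) (hw0 _ _ _ _), ?_, ?_, ?_, ?_, ?_, ?_, ?_⟩⟩ <;>
      · beta_reduce
        linarith
  · rintro ⟨p12, ⟨q, hq0, hq1, hqa, hqb, hqc, hqd, hqe, hqf⟩,
      ⟨r, hr0, hr1, hra, hrb, hrc, hrd, hre, hrf⟩⟩
    have hm : ∀ a b, r a b false + r a b true = q a b false + q a b true := by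
      intro a b
      cases a <;> cases b <;> linarith
    have F1 : ∀ a b c, q a b c * r a b false / (q a b false + q a b true)
        + q a b c * r a b true / (q a b false + q a b true) = q a b c := by
      intro a b c
      refine fine_key _ _ _ _ (hq0 a b c) ?_ (hm a b)
      cases c
      · exact le_add_of_nonneg_right (hq0 a b true)
      · exact le_add_of_nonneg_left (hq0 a b false)
    have F2 : ∀ a b d, q a b false * r a b d / (q a b false + q a b true)
        + q a b true * r a b d / (q a b false + q a b true) = r a b d := by
      intro a b d
      have h1 : r a b d ≤ q a b false + q a b true := by
        have := hm a b
        cases d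
        · linarith [hr0 a b true]
        · linarith [hr0 a b false]
      have := fine_key (q a b false + q a b true) (r a b d) (q a b false) (q a b true)
        (hr0 a b d) h1 rfl
      linear_combination this
    refine ⟨fun a b c d => q a b c * r a b d / (q a b false + q a b true),
      fun a b c d => div_nonneg (mul_nonneg (hq0 _ _ _) (hr0 _ _ _))
        (add_nonneg (hq0 _ _ _) (hq0 _ _ _)), ?_, ?_, ?_, ?_, ?_, ?_, ?_, ?_, ?_⟩ <;>
      · beta_reduce
        linarith [F1 false false false, F1 false false true, F1 false true false, F1 false true true, F1 true false false, F1 true false true, F1 true true false, F1 true true true, F2 false false false, F2 false false true, F2 false true false, F2 false true true, F2 true false false, F2 true false true, F2 true true false, F2 true true true]
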